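/- Let (X,d,μ) be a metric measure space, (U,φ) a rectifiable chart of dimension k (i.e., φ : X → ℝᵏ Lipschitz, bi-Lipschitz on the Borel set U, with φ_#(μ|_U) ≪ ℒᵏ|_{φ(U)}). Then there exist countably many Borel sets V_i ⊆ U with μ(U \ ⋃_i V_i) = 0 and constants C_i > 0 such that (1/C_i)·ℒᵏ|_{φ(V_i)} ≤ φ_#(μ|_{V_i}) ≤ C_i·ℒᵏ|_{φ(V_i)}. -/

import Mathlib

open MeasureTheory

/-- for a rectifiable chart `(U, φ)` of dimension `k` (φ Lipschitz, bi-Lipschitz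
on the Borel set `U`, `φ_#(μ|_U) ≪ ℒᵏ|_{φ(U)}`), there are countably many Borel sets
`V i ⊆ U` covering `U` up to a null set and constants `C i > 0` with
`(C i)⁻¹ ℒᵏ|_{φ(V i)} ≤ φ_#(μ|_{V i}) ≤ C i · ℒᵏ|_{φ(V i)}`. -/
theorem stmt_7 {X : Type*} [MetricSpace X] [MeasurableSpace X] [BorelSpace X]
    (μ : Measure X) (hfin : ∀ B : Set X, Bornology.IsBounded B → μ B < ⊤)
    {k : ℕ} (U : Set X) (hU : MeasurableSet U)
    (φ : X → EuclideanSpace ℝ (Fin k)) (L : NNReal) (hφ : LipschitzWith L φ)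
    (c : ℝ) (hc : 0 < c)
    (hbilip : ∀ x ∈ U, ∀ y ∈ U, dist x y ≤ c * dist (φ x) (φ y))
    (hac : (μ.restrict U).map φ ≪ volume.restrict (φ '' U)) :
    ∃ (V : ℕ → Set X) (C : ℕ → NNReal),
      (∀ i, MeasurableSet (V i)) ∧ (∀ i, V i ⊆ U) ∧ μ (U \ ⋃ i, V i) = 0 ∧
      ∀ i, 0 < C i ∧
        ((C i : ENNReal))⁻¹ • volume.restrict (φ '' V i) ≤ (μ.restrict (V i)).map φ ∧
        (μ.restrict (V i)).map φ ≤ (C i : ENNReal) • volume.restrict (φ '' V i) := by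
  have hφm : Measurable φ := hφ.continuous.measurable
  set ν : Measure (EuclideanSpace ℝ (Fin k)) := (μ.restrict U).map φ with hνdef
  -- ν is σ-finite
  have hbdd : ∀ n : ℕ, ν (Metric.ball 0 n) < ⊤ := by
    intro n
    rw [hνdef, Measure.map_apply hφm measurableSet_ball,
      Measure.restrict_apply (hφm measurableSet_ball)]
    apply hfin
    rw [Metric.isBounded_iff]
    refine ⟨c * (n + n), ?_⟩
    rintro x ⟨hx1, hx2⟩ y ⟨hy1, hy2⟩
    have h1 : dist (φ x) 0 < n := Metric.mem_ball.1 hx1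
    have h2 : dist (φ y) 0 < n := Metric.mem_ball.1 hy1
    calc dist x y ≤ c * dist (φ x) (φ y) := hbilip x hx2 y hy2
      _ ≤ c * ((n : ℝ) + n) := by
          have := dist_triangle (φ x) 0 (φ y)
          rw [dist_comm 0 (φ y)] at this
          nlinarith
  have hσ : SigmaFinite ν :=
    ⟨⟨⟨fun n => Metric.ball 0 n, fun _ => trivial, hbdd, Metric.iUnion_ball_nat 0⟩⟩⟩
  have hνvol : ν ≪ (volume : Measure (EuclideanSpace ℝ (Fin k))) :=
    hac.trans (Measure.absolutelyContinuous_of_le Measure.restrict_le_self)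
  set g : EuclideanSpace ℝ (Fin k) → ENNReal := ν.rnDeriv volume with hgdef
  have hg : Measurable g := Measure.measurable_rnDeriv _ _
  have hgν : (volume : Measure (EuclideanSpace ℝ (Fin k))).withDensity g = ν :=
    Measure.withDensity_rnDeriv_eq _ _ hνvol
  set A : ℕ → Set (EuclideanSpace ℝ (Fin k)) :=
    fun i => g ⁻¹' Set.Ioc (((i : ENNReal) + 1))⁻¹ ((i : ENNReal) + 1) with hAdef
  have hA : ∀ i, MeasurableSet (A i) := fun i => hg measurableSet_Ioc
  refine ⟨fun i => U ∩ φ ⁻¹' (A i), fun i => (i : NNReal) + 1, ?_, ?_, ?_, ?_⟩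
  · exact fun i => hU.inter (hφm (hA i))
  · exact fun i => Set.inter_subset_left
  · -- null covering
    have hcompl : (⋃ i, A i)ᶜ ⊆ {y | g y = 0} ∪ {y | g y = ⊤} := by
      intro y hy
      simp only [Set.mem_union, Set.mem_setOf_eq]
      by_contra h
      push_neg at h
      obtain ⟨h0, htop⟩ := h
      obtain ⟨n, hn⟩ := ENNReal.exists_nat_gt htop
      obtain ⟨m, hm⟩ := ENNReal.exists_inv_nat_lt h0
      refine hy (Set.mem_iUnion.2 ⟨n + m, ?_⟩)
      constructor
      · refine lt_of_le_of_lt ?_ hm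
        apply ENNReal.inv_le_inv.2
        exact_mod_cast by exact_mod_cast Nat.cast_le.2 (by omega : m ≤ n + m + 1)
      · exact le_trans hn.le (by exact_mod_cast Nat.cast_le.2 (by omega : n ≤ n + m + 1))
    have hmeas0 : MeasurableSet {y : EuclideanSpace ℝ (Fin k) | g y = 0} :=
      hg (measurableSet_singleton 0)
    have h0 : ν {y | g y = 0} = 0 := by
      rw [← hgν, withDensity_apply _ hmeas0]
      rw [setLIntegral_congr_fun hmeas0
        (fun y (hy : g y = 0) => hy)]
      simp
    have htop : ν {y | g y = ⊤} = 0 := by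
      apply hνvol
      have := Measure.rnDeriv_lt_top ν (volume : Measure (EuclideanSpace ℝ (Fin k)))
      rw [← hgdef] at this
      refine measure_mono_null (fun y hy => ?_) (ae_iff.1 this)
      simp only [Set.mem_setOf_eq] at hy ⊢
      simp [hy]
    have hSnull : ν ((⋃ i, A i)ᶜ) = 0 :=
      measure_mono_null hcompl (le_antisymm (le_trans (measure_union_le _ _) (by simp [h0, htop])) zero_le)
    have hset : U \ ⋃ i, U ∩ φ ⁻¹' (A i) = U ∩ φ ⁻¹' ((⋃ i, A i)ᶜ) := by
      ext y
      simp only [Set.mem_diff, Set.mem_iUnion, Set.mem_inter_iff, Set.mem_preimage,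
        Set.mem_compl_iff, not_exists]
      tauto
    rw [hset, Set.inter_comm, ← Measure.restrict_apply' hU, ← Measure.map_apply hφm (MeasurableSet.compl (MeasurableSet.iUnion hA)), ← hνdef]
    exact hSnull
  · intro i
    have hVmeas : MeasurableSet (φ ⁻¹' (A i)) := hφm (hA i)
    have hmap : (μ.restrict (U ∩ φ ⁻¹' (A i))).map φ = ν.restrict (A i) := by
      rw [hνdef, Measure.restrict_map hφm (hA i), Measure.restrict_restrict hVmeas,
        Set.inter_comm]
    have himg : φ '' (U ∩ φ ⁻¹' (A i)) = φ '' U ∩ A i := Set.image_inter_preimage φ U (A i)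
    have hCpos : (0 : NNReal) < (i : NNReal) + 1 := by positivity
    have hCcast : (((i : NNReal) + 1 : NNReal) : ENNReal) = (i : ENNReal) + 1 := by
      push_cast; ring
    refine ⟨hCpos, ?_, ?_⟩
    · -- lower bound
      rw [Measure.le_iff]
      intro B hB
      rw [hmap, himg, Measure.smul_apply, smul_eq_mul,
        Measure.restrict_apply hB, Measure.restrict_apply hB, hCcast]
      have h1 : volume (B ∩ (φ '' U ∩ A i)) ≤ volume (B ∩ A i) :=
        measure_mono (by intro y hy; exact ⟨hy.1, hy.2.2⟩)
      have h2 : ((i : ENNReal) + 1)⁻¹ * volume (B ∩ A i) ≤ ν (B ∩ A i) := by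
        rw [← hgν, withDensity_apply _ (hB.inter (hA i)), ← setLIntegral_const]
        refine setLIntegral_mono' (hB.inter (hA i)) (fun y hy => ?_)
        exact (hy.2.1).le
      calc ((i : ENNReal) + 1)⁻¹ * volume (B ∩ (φ '' U ∩ A i))
          ≤ ((i : ENNReal) + 1)⁻¹ * volume (B ∩ A i) := by gcongr
        _ ≤ ν (B ∩ A i) := h2
    · -- upper bound
      rw [Measure.le_iff]
      intro B hB
      rw [hmap, himg, Measure.smul_apply, smul_eq_mul,
        Measure.restrict_apply hB, Measure.restrict_apply hB, hCcast]
      set E := toMeasurable (volume : Measure (EuclideanSpace ℝ (Fin k))) (φ '' U) with hEdef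
      have hEmeas : MeasurableSet E := measurableSet_toMeasurable _ _
      have hEc : ν Eᶜ = 0 := by
        apply hac
        rw [Measure.restrict_apply hEmeas.compl]
        have : Eᶜ ∩ φ '' U = ∅ := by
          rw [← Set.diff_eq_compl_inter, Set.diff_eq_empty]
          exact subset_toMeasurable _ _
        rw [this]; simp
      have hsplit : ν (B ∩ A i) = ν (B ∩ A i ∩ E) := by
        have := measure_inter_add_diff (μ := ν) (B ∩ A i) hEmeas
        have hdiff : ν ((B ∩ A i) \ E) = 0 :=
          measure_mono_null (fun y hy => hy.2) hEc
        rw [hdiff, add_zero] at this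
        exact this.symm
      have hup : ν (B ∩ A i ∩ E) ≤ ((i : ENNReal) + 1) * volume (B ∩ A i ∩ E) := by
        rw [← hgν, withDensity_apply _ ((hB.inter (hA i)).inter hEmeas), ← setLIntegral_const]
        refine setLIntegral_mono' ((hB.inter (hA i)).inter hEmeas) (fun y hy => ?_)
        exact hy.1.2.2
      have hE2 : volume (B ∩ A i ∩ E) = volume (B ∩ (φ '' U ∩ A i)) := by
        have h := Measure.measure_toMeasurable_inter_of_sFinite (μ := (volume : Measure (EuclideanSpace ℝ (Fin k)))) (hB.inter (hA i)) (φ '' U)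
        rw [← hEdef] at h
        rw [Set.inter_comm (B ∩ A i) E, h]
        congr 1
        ext y
        simp only [Set.mem_inter_iff]
        tauto
      rw [hsplit, ← hE2]
      exact hup
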